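/- Suppose ε, β, γ, ρ with ε, β, γ > 0 satisfy Condition C1. Then for each α ∈ [0,1] the algebraic system 0 = (1 − α²ρ²/2)X̃₁(α) − X̃₁(α)³/3 − Ỹ₁(α), 0 = X̃₁(α) − γỸ₁(α) + β has a unique solution (X̃₁(α), Ỹ₁(α)), and the following hold: (i) X̃₁(α)² > 1 − α²ρ²/2 for every α ∈ [0,1]; (ii) the functions α ↦ X̃₁(α) and α ↦ Ỹ₁(α) are continuous on [0,1] and differentiable on (0,1) (with one-sided derivatives at α = 0 and α = 1); (iii) on (0,1) the derivatives satisfy X̃₁′(α)·(1 − α²ρ²/2 − X̃₁(α)² − 1/γ) = α ρ² X̃₁(α) and Ỹ₁′(α) = (1/γ)·X̃₁′(α), and the quantity J(α) = γ(X̃₁(α)² − 1 + α²ρ²/2) + 1 is strictly positive for all α ∈ [0,1]. -/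

import Mathlib

open Set
open Filter

/-- Condition C1: for every `α ∈ [0,1]` the system
`v' = (1 − α²ρ²/2)v − v³/3 − w`, `w' = ε(v − γw + β)` has a unique equilibrium,
this equilibrium is stable (negative trace and positive determinant of the
linearization `[[1 − α²ρ²/2 − v₀², −1],[ε, −εγ]]`), and there is `c > 0` with
`v₀(α)² − 1 + α²ρ²/2 > c` uniformly in `α`. -/
def CondC1 (ε β γ ρ : ℝ) : Prop :=
  (∀ α ∈ Icc (0:ℝ) 1, ∃! p : ℝ × ℝ,
    (1 - α ^ 2 * ρ ^ 2 / 2) * p.1 - p.1 ^ 3 / 3 - p.2 = 0 ∧ p.1 - γ * p.2 + β = 0) ∧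
  (∀ α ∈ Icc (0:ℝ) 1, ∀ p : ℝ × ℝ,
    ((1 - α ^ 2 * ρ ^ 2 / 2) * p.1 - p.1 ^ 3 / 3 - p.2 = 0 ∧ p.1 - γ * p.2 + β = 0) →
    (1 - α ^ 2 * ρ ^ 2 / 2 - p.1 ^ 2) - ε * γ < 0 ∧
    (1 - α ^ 2 * ρ ^ 2 / 2 - p.1 ^ 2) * (-(ε * γ)) + ε > 0) ∧
  (∃ c > (0:ℝ), ∀ α ∈ Icc (0:ℝ) 1, ∀ p : ℝ × ℝ,
    ((1 - α ^ 2 * ρ ^ 2 / 2) * p.1 - p.1 ^ 3 / 3 - p.2 = 0 ∧ p.1 - γ * p.2 + β = 0) →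
    p.1 ^ 2 - 1 + α ^ 2 * ρ ^ 2 / 2 > c)

section Helpers

lemma cube_aux (A s q : ℝ) (hq : 0 < q) (hs : 3 + 3 * |A| + q ≤ s) : A * s + q < s ^ 3 / 3 := by
  have h3 : (3:ℝ) ≤ s := by linarith [abs_nonneg A, hq.le]
  have f1 : 3 * s ^ 2 ≤ s ^ 3 := by nlinarith [sq_nonneg s]
  have f2 : (3 + 3 * |A| + q) * s ≤ s ^ 2 := by nlinarith
  have f3 : A * s ≤ |A| * s := mul_le_mul_of_nonneg_right (le_abs_self A) (by linarith)
  have f4 : 0 ≤ |A| * s := mul_nonneg (abs_nonneg A) (by linarith)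
  have f5 : 0 ≤ q * (s - 3) := mul_nonneg hq.le (by linarith)
  nlinarith

noncomputable def Faux (β γ ρ : ℝ) (α x : ℝ) : ℝ :=
  (1 - α ^ 2 * ρ ^ 2 / 2) * x - x ^ 3 / 3 - (x + β) / γ

lemma Faux_cont (β γ ρ α : ℝ) : Continuous (Faux β γ ρ α) := by
  unfold Faux; fun_prop

lemma Faux_cont_alpha (β γ ρ x : ℝ) : Continuous (fun α => Faux β γ ρ α x) := by
  unfold Faux; fun_prop

lemma Faux_below (β γ ρ : ℝ) (hβ : 0 < β) (hγ : 0 < γ) (α b : ℝ) :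
    ∃ t < b, 0 < Faux β γ ρ α t := by
  set A : ℝ := 1 - α ^ 2 * ρ ^ 2 / 2 - 1 / γ with hA
  have hβγ : 0 < β / γ := div_pos hβ hγ
  refine ⟨min (b - 1) (-(3 + 3 * |A| + β / γ)), lt_of_le_of_lt (min_le_left _ _) (by linarith), ?_⟩
  set t : ℝ := min (b - 1) (-(3 + 3 * |A| + β / γ)) with htdef
  have ht2 : t ≤ -(3 + 3 * |A| + β / γ) := min_le_right _ _
  have hFt : Faux β γ ρ α t = A * t - t ^ 3 / 3 - β / γ := by
    unfold Faux; rw [hA]; ring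
  have key := cube_aux A (-t) (β / γ) hβγ (by linarith)
  clear_value t A
  rw [hFt]
  have hneg : A * (-t) + β / γ < (-t) ^ 3 / 3 := key
  nlinarith [hneg]

lemma Faux_above (β γ ρ : ℝ) (hβ : 0 < β) (hγ : 0 < γ) (α b : ℝ) :
    ∃ t > b, Faux β γ ρ α t < 0 := by
  set A : ℝ := 1 - α ^ 2 * ρ ^ 2 / 2 - 1 / γ with hA
  have hβγ : 0 < β / γ := div_pos hβ hγ
  refine ⟨max (b + 1) (3 + 3 * |A| + β / γ), lt_of_lt_of_le (by linarith) (le_max_left _ _), ?_⟩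
  set t : ℝ := max (b + 1) (3 + 3 * |A| + β / γ) with htdef
  have ht2 : 3 + 3 * |A| + β / γ ≤ t := le_max_right _ _
  have hFt : Faux β γ ρ α t = A * t - t ^ 3 / 3 - β / γ := by
    unfold Faux; rw [hA]; ring
  have key := cube_aux (|A|) t (β / γ) hβγ (by rw [abs_abs]; linarith)
  have f3 : A * t ≤ |A| * t := mul_le_mul_of_nonneg_right (le_abs_self A)
    (by linarith [abs_nonneg A])
  clear_value t A
  rw [hFt]; linarith

end Helpers


/-- **Lemma (Properties of the algebraic system, steering problem 1).** -/
theorem stmt_5 (ε β γ ρ : ℝ) (hε : 0 < ε) (hβ : 0 < β) (hγ : 0 < γ)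
    (hC1 : CondC1 ε β γ ρ) :
    (∀ α ∈ Icc (0:ℝ) 1, ∃! p : ℝ × ℝ,
      (1 - α ^ 2 * ρ ^ 2 / 2) * p.1 - p.1 ^ 3 / 3 - p.2 = 0 ∧ p.1 - γ * p.2 + β = 0) ∧
    ∀ X Y : ℝ → ℝ,
      (∀ α ∈ Icc (0:ℝ) 1,
        (1 - α ^ 2 * ρ ^ 2 / 2) * X α - X α ^ 3 / 3 - Y α = 0 ∧ X α - γ * Y α + β = 0) →
      (∀ α ∈ Icc (0:ℝ) 1, X α ^ 2 > 1 - α ^ 2 * ρ ^ 2 / 2) ∧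
      ContinuousOn X (Icc 0 1) ∧ ContinuousOn Y (Icc 0 1) ∧
      (∀ α ∈ Icc (0:ℝ) 1, DifferentiableWithinAt ℝ X (Icc (0:ℝ) 1) α ∧
        DifferentiableWithinAt ℝ Y (Icc (0:ℝ) 1) α) ∧
      (∀ α ∈ Ioo (0:ℝ) 1, ∃ dX dY : ℝ, HasDerivAt X dX α ∧ HasDerivAt Y dY α ∧
        dX * (1 - α ^ 2 * ρ ^ 2 / 2 - X α ^ 2 - 1 / γ) = α * ρ ^ 2 * X α ∧
        dY = (1 / γ) * dX) ∧
      (∀ α ∈ Icc (0:ℝ) 1, 0 < γ * (X α ^ 2 - 1 + α ^ 2 * ρ ^ 2 / 2) + 1) := by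
  obtain ⟨hU, hStab, c, hc, hcb⟩ := hC1
  refine ⟨hU, ?_⟩
  intro X Y hXY
  have hγ' : γ ≠ 0 := ne_of_gt hγ
  -- Y in terms of X
  have hYX : ∀ α ∈ Icc (0:ℝ) 1, Y α = (X α + β) / γ := by
    intro α hα
    have h2 := (hXY α hα).2
    field_simp
    linarith
  -- F vanishes at X
  have hFX : ∀ α ∈ Icc (0:ℝ) 1, Faux β γ ρ α (X α) = 0 := by
    intro α hα
    have h1 := (hXY α hα).1
    unfold Faux
    rw [← hYX α hα]
    linarith
  -- uniqueness of root
  have huniq : ∀ α ∈ Icc (0:ℝ) 1, ∀ x, Faux β γ ρ α x = 0 → x = X α := by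
    intro α hα x hx
    obtain ⟨p, hp, hup⟩ := hU α hα
    have e1 : ((x, (x + β) / γ) : ℝ × ℝ) = p := by
      apply hup
      constructor
      · have : (1 - α ^ 2 * ρ ^ 2 / 2) * x - x ^ 3 / 3 - (x + β) / γ = 0 := hx
        simpa using this
      · simp only
        field_simp
        ring
    have e2 : ((X α, Y α) : ℝ × ℝ) = p := hup _ (hXY α hα)
    have := e1.trans e2.symm
    exact (Prod.mk.injEq _ _ _ _ ▸ this).1
  -- the uniform bound from C1
  have hsq : ∀ α ∈ Icc (0:ℝ) 1, X α ^ 2 - 1 + α ^ 2 * ρ ^ 2 / 2 > c := by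
    intro α hα
    exact hcb α hα (X α, Y α) (hXY α hα)
  -- X is negative
  have hXneg : ∀ α ∈ Icc (0:ℝ) 1, X α < 0 := by
    intro α hα
    obtain ⟨t, ht, hFt⟩ := Faux_below β γ ρ hβ hγ α 0
    have hF0 : Faux β γ ρ α 0 < 0 := by
      have he : Faux β γ ρ α 0 = -(β / γ) := by unfold Faux; ring
      rw [he]
      have := div_pos hβ hγ
      linarith
    have hsub := intermediate_value_Icc' (le_of_lt ht) (Faux_cont β γ ρ α).continuousOn
    have h0mem : (0:ℝ) ∈ Icc (Faux β γ ρ α 0) (Faux β γ ρ α t) := ⟨hF0.le, hFt.le⟩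
    obtain ⟨z, hz, hz0⟩ := hsub h0mem
    have hzX : z = X α := huniq α hα z hz0
    have : X α ≤ 0 := hzX ▸ hz.2
    rcases this.lt_or_eq with h | h
    · exact h
    · exfalso
      have h0 := hFX α hα
      rw [h] at h0
      linarith
  -- sign of F left of the root
  have hsignpos : ∀ α ∈ Icc (0:ℝ) 1, ∀ x, x < X α → 0 < Faux β γ ρ α x := by
    intro α hα x hxlt
    by_contra h
    push_neg at h
    rcases h.lt_or_eq with h | h
    · obtain ⟨t, ht, hFt⟩ := Faux_below β γ ρ hβ hγ α x
      have hsub := intermediate_value_Icc' (le_of_lt ht) (Faux_cont β γ ρ α).continuousOn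
      obtain ⟨z, hz, hz0⟩ := hsub ⟨h.le, hFt.le⟩
      have hzX : z = X α := huniq α hα z hz0
      have : X α ≤ x := hzX ▸ hz.2
      linarith
    · exact absurd (huniq α hα x h) (ne_of_lt hxlt)
  -- sign of F right of the root
  have hsignneg : ∀ α ∈ Icc (0:ℝ) 1, ∀ x, X α < x → Faux β γ ρ α x < 0 := by
    intro α hα x hxlt
    by_contra h
    push_neg at h
    rcases h.lt_or_eq with h | h
    · obtain ⟨t, ht, hFt⟩ := Faux_above β γ ρ hβ hγ α x
      have hsub := intermediate_value_Icc' (le_of_lt ht) (Faux_cont β γ ρ α).continuousOn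
      obtain ⟨z, hz, hz0⟩ := hsub ⟨hFt.le, h.le⟩
      have hzX : z = X α := huniq α hα z hz0
      have : x ≤ X α := hzX ▸ hz.1
      linarith
    · exact absurd (huniq α hα x h.symm) (ne_of_gt hxlt)
  -- continuity of X
  have hXcont : ContinuousOn X (Icc 0 1) := by
    intro α₀ hα₀
    rw [ContinuousWithinAt, Metric.tendsto_nhds]
    intro δ hδ
    have hplus : Faux β γ ρ α₀ (X α₀ + δ) < 0 := hsignneg α₀ hα₀ _ (by linarith)
    have hminus : 0 < Faux β γ ρ α₀ (X α₀ - δ) := hsignpos α₀ hα₀ _ (by linarith)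
    have ev1 : ∀ᶠ α in nhds α₀, Faux β γ ρ α (X α₀ + δ) < 0 :=
      ((Faux_cont_alpha β γ ρ (X α₀ + δ)).continuousAt).eventually_lt_const hplus
    have ev2 : ∀ᶠ α in nhds α₀, 0 < Faux β γ ρ α (X α₀ - δ) :=
      ((Faux_cont_alpha β γ ρ (X α₀ - δ)).continuousAt).eventually_const_lt hminus
    have ev3 : ∀ᶠ α in nhdsWithin α₀ (Icc 0 1), α ∈ Icc (0:ℝ) 1 := self_mem_nhdsWithin
    filter_upwards [ev1.filter_mono nhdsWithin_le_nhds, ev2.filter_mono nhdsWithin_le_nhds, ev3]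
      with α h1 h2 hα
    have hlt1 : X α < X α₀ + δ := by
      by_contra hcon
      push_neg at hcon
      rcases hcon.lt_or_eq with h | h
      · exact absurd (hsignpos α hα _ h) (by linarith)
      · exact absurd (hFX α hα) (by rw [h] at h1; linarith)
    have hlt2 : X α₀ - δ < X α := by
      by_contra hcon
      push_neg at hcon
      rcases hcon.lt_or_eq with h | h
      · exact absurd (hsignneg α hα _ h) (by linarith)
      · exact absurd (hFX α hα) (by rw [← h] at h2; linarith)
    rw [Real.dist_eq, abs_sub_lt_iff]
    constructor <;> linarith
  -- derivative within Icc
  have hDne : ∀ α ∈ Icc (0:ℝ) 1,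
      1 - α ^ 2 * ρ ^ 2 / 2 - 1 / γ - X α ^ 2 < 0 := by
    intro α hα
    have h1 := hsq α hα
    have h2 : 0 < 1 / γ := by positivity
    linarith
  have hderivX : ∀ α₀ ∈ Icc (0:ℝ) 1,
      HasDerivWithinAt X
        (X α₀ * (α₀ * ρ ^ 2) / (1 - α₀ ^ 2 * ρ ^ 2 / 2 - 1 / γ - X α₀ ^ 2))
        (Icc 0 1) α₀ := by
    intro α₀ hα₀
    set D₀ : ℝ := 1 - α₀ ^ 2 * ρ ^ 2 / 2 - 1 / γ - X α₀ ^ 2 with hD₀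
    have hD₀ne : D₀ < 0 := hDne α₀ hα₀
    set C : ℝ → ℝ := fun α =>
      1 - α₀ ^ 2 * ρ ^ 2 / 2 - 1 / γ - (X α ^ 2 + X α * X α₀ + X α₀ ^ 2) / 3 with hC
    have hCcont : ContinuousWithinAt C (Icc 0 1) α₀ := by
      have hXc : ContinuousWithinAt X (Icc 0 1) α₀ := hXcont α₀ hα₀
      exact continuousWithinAt_const.sub
        ((((hXc.pow 2).add (hXc.mul continuousWithinAt_const)).add
          continuousWithinAt_const).div_const 3)
    have hCval : C α₀ = D₀ := by simp only [hC, hD₀]; ring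
    have hCD : Tendsto C (nhdsWithin α₀ (Icc 0 1 \ {α₀})) (nhds D₀) := by
      rw [← hCval]
      exact (hCcont.mono diff_subset).tendsto
    -- slope of a
    have ha : HasDerivAt (fun α : ℝ => α ^ 2 * ρ ^ 2 / 2) (α₀ * ρ ^ 2) α₀ := by
      have h := (hasDerivAt_pow 2 α₀).mul_const (ρ ^ 2 / 2)
      have hfe : (fun x : ℝ => x ^ 2 * (ρ ^ 2 / 2)) = (fun α : ℝ => α ^ 2 * ρ ^ 2 / 2) := by
        funext x; ring
      rw [hfe] at h
      refine h.congr_deriv ?_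
      push_cast
      ring
    have hslopea : Tendsto (slope (fun α : ℝ => α ^ 2 * ρ ^ 2 / 2) α₀)
        (nhdsWithin α₀ (Icc 0 1 \ {α₀})) (nhds (α₀ * ρ ^ 2)) := by
      have h1 := hasDerivAt_iff_tendsto_slope.mp ha
      exact h1.mono_left (nhdsWithin_mono _ (fun x hx => hx.2))
    have hXt : Tendsto X (nhdsWithin α₀ (Icc 0 1 \ {α₀})) (nhds (X α₀)) :=
      ((hXcont α₀ hα₀).mono diff_subset).tendsto
    rw [hasDerivWithinAt_iff_tendsto_slope]
    have hmain : Tendsto (fun α => X α * slope (fun α : ℝ => α ^ 2 * ρ ^ 2 / 2) α₀ α / C α)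
        (nhdsWithin α₀ (Icc 0 1 \ {α₀})) (nhds (X α₀ * (α₀ * ρ ^ 2) / D₀)) :=
      (hXt.mul hslopea).div hCD (ne_of_lt hD₀ne)
    refine hmain.congr' ?_
    have evC : ∀ᶠ α in nhdsWithin α₀ (Icc 0 1 \ {α₀}), C α < 0 :=
      hCD.eventually_lt_const hD₀ne
    have evmem : ∀ᶠ α in nhdsWithin α₀ (Icc 0 1 \ {α₀}), α ∈ Icc (0:ℝ) 1 \ {α₀} :=
      self_mem_nhdsWithin
    filter_upwards [evC, evmem] with α hCα hmem
    have hne : α - α₀ ≠ 0 := sub_ne_zero.mpr hmem.2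
    have h1 := hFX α hmem.1
    have h2 := hFX α₀ hα₀
    unfold Faux at h1 h2
    have key : (X α - X α₀) * C α = X α * (α ^ 2 * ρ ^ 2 / 2 - α₀ ^ 2 * ρ ^ 2 / 2) := by
      simp only [hC]
      linear_combination h1 - h2
    have hCne : C α ≠ 0 := ne_of_lt hCα
    have hXd : X α - X α₀ = X α * (α ^ 2 * ρ ^ 2 / 2 - α₀ ^ 2 * ρ ^ 2 / 2) / C α := by
      rw [eq_div_iff hCne]; exact key
    rw [slope_def_field, slope_def_field]
    rw [hXd]
    ring
  -- Y continuity
  have hYcont : ContinuousOn Y (Icc 0 1) :=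
    (((hXcont.add continuousOn_const).div_const γ)).congr hYX
  refine ⟨?_, hXcont, hYcont, ?_, ?_, ?_⟩
  · intro α hα
    have := hsq α hα
    linarith
  · intro α hα
    refine ⟨(hderivX α hα).differentiableWithinAt, ?_⟩
    have hY : HasDerivWithinAt Y
        (X α * (α * ρ ^ 2) / (1 - α ^ 2 * ρ ^ 2 / 2 - 1 / γ - X α ^ 2) / γ) (Icc 0 1) α :=
      (((hderivX α hα).add_const β).div_const γ).congr (fun x hx => hYX x hx) (hYX α hα)
    exact hY.differentiableWithinAt
  · intro α hα
    have hαI : α ∈ Icc (0:ℝ) 1 := Ioo_subset_Icc_self hα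
    have hIcc : Icc (0:ℝ) 1 ∈ nhds α := Icc_mem_nhds hα.1 hα.2
    set d : ℝ := X α * (α * ρ ^ 2) / (1 - α ^ 2 * ρ ^ 2 / 2 - 1 / γ - X α ^ 2) with hd
    have hX : HasDerivAt X d α := (hderivX α hαI).hasDerivAt hIcc
    have hYeq : Y =ᶠ[nhds α] fun t => (X t + β) / γ :=
      eventuallyEq_of_mem hIcc (fun x hx => hYX x hx)
    have hY : HasDerivAt Y (d / γ) α :=
      (((hX.add_const β).div_const γ)).congr_of_eventuallyEq hYeq
    refine ⟨d, d / γ, hX, hY, ?_, by ring⟩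
    have hDne' : (1 - α ^ 2 * ρ ^ 2 / 2 - 1 / γ - X α ^ 2) ≠ 0 := ne_of_lt (hDne α hαI)
    have hfac : 1 - α ^ 2 * ρ ^ 2 / 2 - X α ^ 2 - 1 / γ
        = 1 - α ^ 2 * ρ ^ 2 / 2 - 1 / γ - X α ^ 2 := by ring
    rw [hd, hfac, div_mul_cancel₀ _ hDne']
    ring
  · intro α hα
    have h1 := hsq α hα
    have h2 : γ * c ≤ γ * (X α ^ 2 - 1 + α ^ 2 * ρ ^ 2 / 2) :=
      mul_le_mul_of_nonneg_left h1.le hγ.le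
    nlinarith [mul_pos hγ hc]
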